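/- Let A be an ℕ×ℕ matrix over a unital ring R with N(A) < ∞ and such that some row of A has at least 2 nonzero entries (r(A) > 1). Then A = A₁ + ⋯ + A_k where each A_i lies in Γ(R)AΓ(R), each A_i has strictly fewer maximal nonzero row entries than A (r(A_i) < r(A)), and c(A_i) ≤ c(A). -/

import Mathlib

open scoped BigOperators

/-- `N(A) < ∞`: there is a common finite bound on the number of nonzero entries
of every row and of every column of the `ℕ×ℕ` matrix `A`. -/
def NFin {R : Type*} [Ring R] (A : ℕ → ℕ → R) : Prop :=
  ∃ N : ℕ,
    (∀ i, {j | A i j ≠ 0}.Finite ∧ {j | A i j ≠ 0}.ncard ≤ N) ∧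
    (∀ j, {i | A i j ≠ 0}.Finite ∧ {i | A i j ≠ 0}.ncard ≤ N)

/-- Membership in Karoubi's cone `Γ(R)`: `N(A) < ∞` and the set of entries of
`A` is finite. -/
def InGamma {R : Type*} [Ring R] (A : ℕ → ℕ → R) : Prop :=
  NFin A ∧ (Set.range fun p : ℕ × ℕ => A p.1 p.2).Finite

/-- The (locally finite) product `P * A * Q` of `ℕ×ℕ` matrices, defined
entrywise by finite sums. -/
noncomputable def mul3 {R : Type*} [Ring R] (P A Q : ℕ → ℕ → R) : ℕ → ℕ → R :=
  fun i j => ∑ᶠ (k : ℕ), ∑ᶠ (l : ℕ), P i k * A k l * Q l j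

/-- `B ∈ Γ(R) A Γ(R)`: `B` is a finite sum of products `P A Q` with
`P, Q ∈ Γ(R)`. -/
def InGAG {R : Type*} [Ring R] (A B : ℕ → ℕ → R) : Prop :=
  ∃ (n : ℕ) (P Q : Fin n → (ℕ → ℕ → R)),
    (∀ t, InGamma (P t) ∧ InGamma (Q t)) ∧ B = ∑ t, mul3 (P t) A (Q t)

/-- `r(A)`: the supremum over rows of the number of nonzero entries. -/
noncomputable def rsup {R : Type*} [Ring R] (A : ℕ → ℕ → R) : ℕ :=
  ⨆ i, {j | A i j ≠ 0}.ncard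

/-- `c(A)`: the supremum over columns of the number of nonzero entries. -/
noncomputable def csup {R : Type*} [Ring R] (A : ℕ → ℕ → R) : ℕ :=
  ⨆ j, {i | A i j ≠ 0}.ncard

/-! ### Auxiliary machinery -/

/-- Greedy coloring of `ℕ` along a relation. -/
noncomputable def gcolor (rel : ℕ → ℕ → Prop) : ℕ → ℕ
  | i => sInf {c | ∀ i', i' < i → rel i i' → gcolor rel i' ≠ c}

lemma gcolor_def (rel : ℕ → ℕ → Prop) (i : ℕ) :
    gcolor rel i = sInf {c | ∀ i', i' < i → rel i i' → gcolor rel i' ≠ c} := by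
  rw [gcolor]

lemma gcolor_ne (rel : ℕ → ℕ → Prop) (i i' : ℕ) (h : i' < i) (hrel : rel i i') :
    gcolor rel i' ≠ gcolor rel i := by
  have hne : {c | ∀ i', i' < i → rel i i' → gcolor rel i' ≠ c}.Nonempty := by
    have hfin : (gcolor rel '' Set.Iio i).Finite := (Set.finite_Iio i).image _
    obtain ⟨c, hc⟩ := hfin.infinite_compl.nonempty
    exact ⟨c, fun i'' h'' _ hceq => hc ⟨i'', h'', hceq⟩⟩
  have := Nat.sInf_mem hne
  rw [← gcolor_def] at this
  exact this i' h hrel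

lemma exists_not_mem_le (s : Set ℕ) (hs : s.Finite) : ∃ c, c ∉ s ∧ c ≤ s.ncard := by
  by_contra hcon
  push_neg at hcon
  have hsub : (Finset.range (s.ncard + 1) : Set ℕ) ⊆ s := by
    intro c hc
    simp only [Finset.coe_range, Set.mem_Iio] at hc
    by_contra hcs
    exact absurd (hcon c hcs) (by omega)
  have h2 := Set.ncard_le_ncard hsub hs
  rw [Set.ncard_coe_finset, Finset.card_range] at h2
  omega

lemma gcolor_le (rel : ℕ → ℕ → Prop) (D : ℕ)
    (hD : ∀ i, {i' | rel i i'}.Finite ∧ {i' | rel i i'}.ncard ≤ D) (i : ℕ) :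
    gcolor rel i ≤ D := by
  obtain ⟨hfin, hcard⟩ := hD i
  obtain ⟨c, hc, hcle⟩ := exists_not_mem_le (gcolor rel '' {i' | rel i i'}) (hfin.image _)
  have hle : c ≤ D := hcle.trans ((Set.ncard_image_le hfin).trans hcard)
  rw [gcolor_def]
  refine (Nat.sInf_le ?_).trans hle
  exact fun i2 _ hrel hceq => hc ⟨i2, hrel, hceq⟩

lemma ncard_biUnion_le' (s : Set ℕ) (hs : s.Finite) (F : ℕ → Set ℕ) (N : ℕ)
    (hF : ∀ l, (F l).Finite ∧ (F l).ncard ≤ N) :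
    (⋃ l ∈ s, F l).Finite ∧ (⋃ l ∈ s, F l).ncard ≤ s.ncard * N := by
  refine Set.Finite.induction_on s hs (by simp) ?_
  rintro a s ha hs ih
  rw [Set.biUnion_insert]
  refine ⟨(hF a).1.union ih.1, ?_⟩
  calc (F a ∪ ⋃ l ∈ s, F l).ncard ≤ (F a).ncard + (⋃ l ∈ s, F l).ncard :=
        Set.ncard_union_le _ _
    _ ≤ N + s.ncard * N := Nat.add_le_add (hF a).2 ih.2
    _ ≤ (insert a s).ncard * N := by
        rw [Set.ncard_insert_of_notMem ha hs]; ring_nf; omega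

section dgs
variable {R : Type*} [Ring R]
open scoped Classical

/-- Diagonal 0/`v` matrix supported on `S`. -/
noncomputable def dg (v : R) (S : Set ℕ) : ℕ → ℕ → R :=
  fun i k => if i = k ∧ i ∈ S then v else 0

lemma dg_inGamma (v : R) (S : Set ℕ) : InGamma (dg v S) := by
  have hrow : ∀ i, {k | dg v S i k ≠ 0} ⊆ {i} := by
    intro i k hk
    simp only [dg, Set.mem_setOf_eq, ne_eq, ite_eq_right_iff, not_forall] at hk
    exact hk.choose.1.symm
  have hcol : ∀ k, {i | dg v S i k ≠ 0} ⊆ {k} := by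
    intro k i hi
    simp only [dg, Set.mem_setOf_eq, ne_eq, ite_eq_right_iff, not_forall] at hi
    exact hi.choose.1
  refine ⟨⟨1, fun i => ?_, fun k => ?_⟩, ?_⟩
  · exact ⟨(Set.finite_singleton i).subset (hrow i),
      (Set.ncard_le_ncard (hrow i) (Set.finite_singleton i)).trans (by simp)⟩
  · exact ⟨(Set.finite_singleton k).subset (hcol k),
      (Set.ncard_le_ncard (hcol k) (Set.finite_singleton k)).trans (by simp)⟩
  · refine (((Set.finite_singleton (0 : R)).insert v)).subset ?_
    rintro x ⟨p, rfl⟩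
    simp only [dg]
    split <;> simp

lemma mul3_dg (v w : R) (I J : Set ℕ) (A : ℕ → ℕ → R) (i j : ℕ) :
    mul3 (dg v I) A (dg w J) i j = if i ∈ I ∧ j ∈ J then v * A i j * w else 0 := by
  have h1 : ∀ k, (∑ᶠ l, dg v I i k * A k l * dg w J l j) = dg v I i k * A k j * dg w J j j := by
    intro k
    refine finsum_eq_single _ j fun l hl => ?_
    have h : dg w J l j = 0 := by
      simp only [dg, ite_eq_right_iff]; rintro ⟨rfl, -⟩; exact absurd rfl hl
    rw [h, mul_zero]
  have h2 : mul3 (dg v I) A (dg w J) i j = dg v I i i * A i j * dg w J j j := by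
    unfold mul3
    simp_rw [h1]
    refine finsum_eq_single _ i fun k hk => ?_
    have h : dg v I i k = 0 := by
      simp only [dg, ite_eq_right_iff]; rintro ⟨rfl, -⟩; exact absurd rfl hk
    rw [h, zero_mul, zero_mul]
  rw [h2]
  by_cases hi : i ∈ I <;> by_cases hj : j ∈ J <;> simp [dg, hi, hj]
end dgs

theorem stmt8 (R : Type*) [Ring R] (A : ℕ → ℕ → R) (hA : NFin A)
    (hr : 1 < rsup A) :
    ∃ (k : ℕ) (B : Fin k → (ℕ → ℕ → R)),
      A = ∑ t, B t ∧
      ∀ t, InGAG A (B t) ∧ rsup (B t) < rsup A ∧ csup (B t) ≤ csup A := by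
  classical
  obtain ⟨N, hrowN, hcolN⟩ := hA
  set f : ℕ → ℕ := fun i => sInf {j | A i j ≠ 0} with hfdef
  set rel : ℕ → ℕ → Prop := fun i i' => i ≠ i' ∧
      ((A i' (f i') ≠ 0 ∧ A i (f i') ≠ 0) ∨ (A i (f i) ≠ 0 ∧ A i' (f i) ≠ 0)) with hreldef
  have hrelsymm : ∀ i i', rel i i' → rel i' i := by
    rintro i i' ⟨h1, h2⟩
    exact ⟨h1.symm, h2.symm⟩
  -- neighbor bound
  have hnb : ∀ i, {i' | rel i i'}.Finite ∧ {i' | rel i i'}.ncard ≤ N * N + N := by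
    intro i
    have hsub : {i' | rel i i'} ⊆
        (⋃ l ∈ {j | A i j ≠ 0}, {i' | A i' l ≠ 0}) ∪ {i' | A i' (f i) ≠ 0} := by
      rintro i' ⟨-, h | h⟩
      · exact Or.inl (Set.mem_biUnion h.2 h.1)
      · exact Or.inr h.2
    obtain ⟨hUfin, hUcard⟩ := ncard_biUnion_le' _ (hrowN i).1 (fun l => {i' | A i' l ≠ 0}) N
      (fun l => hcolN l)
    have hfin2 : ((⋃ l ∈ {j | A i j ≠ 0}, {i' | A i' l ≠ 0}) ∪ {i' | A i' (f i) ≠ 0}).Finite :=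
      hUfin.union (hcolN (f i)).1
    refine ⟨hfin2.subset hsub, ?_⟩
    calc {i' | rel i i'}.ncard
        ≤ ((⋃ l ∈ {j | A i j ≠ 0}, {i' | A i' l ≠ 0}) ∪ {i' | A i' (f i) ≠ 0}).ncard :=
          Set.ncard_le_ncard hsub hfin2
      _ ≤ (⋃ l ∈ {j | A i j ≠ 0}, {i' | A i' l ≠ 0}).ncard + {i' | A i' (f i) ≠ 0}.ncard :=
          Set.ncard_union_le _ _
      _ ≤ N * N + N := by
          have h1 : {j | A i j ≠ 0}.ncard * N ≤ N * N :=
            Nat.mul_le_mul_right N (hrowN i).2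
          have h2 := (hcolN (f i)).2
          omega
  set col : ℕ → ℕ := gcolor rel with hcoldef
  have hcolle : ∀ i, col i ≤ N * N + N := gcolor_le rel _ hnb
  have hcolne : ∀ i i', rel i i' → col i ≠ col i' := by
    intro i i' hrel
    rcases lt_trichotomy i' i with h | h | h
    · exact (gcolor_ne rel i i' h hrel).symm
    · exact absurd h.symm hrel.1
    · exact gcolor_ne rel i' i h (hrelsymm _ _ hrel)
  set K := N * N + N + 1 with hK
  have hcolK : ∀ i, col i < K := fun i => by have := hcolle i; omega
  set Iset : Fin K → Set ℕ := fun t => {i | col i = (t : ℕ)} with hIdef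
  set Jset : Fin K → Set ℕ := fun t =>
    {j | ∃ i, col i = (t : ℕ) ∧ A i (f i) ≠ 0 ∧ f i = j} with hJdef
  -- the key computation
  have key : ∀ (v : R) (i j : ℕ),
      (∑ t : Fin K, mul3 (dg (1 : R) (Iset t)) A (dg v (Jset t)) i j)
        = (if j = f i then A i j else 0) * v := by
    intro v i j
    have hterm : ∀ t : Fin K, mul3 (dg (1 : R) (Iset t)) A (dg v (Jset t)) i j
        = if i ∈ Iset t ∧ j ∈ Jset t then A i j * v else 0 := by
      intro t; rw [mul3_dg]; simp [one_mul]
    simp_rw [hterm]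
    rw [Finset.sum_eq_single (⟨col i, hcolK i⟩ : Fin K)]
    · have hiI : i ∈ Iset ⟨col i, hcolK i⟩ := rfl
      by_cases hjf : j = f i
      · subst hjf
        by_cases hA0 : A i (f i) = 0
        · rw [hA0]; simp
        · have hjJ : f i ∈ Jset ⟨col i, hcolK i⟩ := ⟨i, rfl, hA0, rfl⟩
          rw [if_pos ⟨hiI, hjJ⟩, if_pos rfl]
      · rw [if_neg hjf, zero_mul]
        by_cases hjJ : j ∈ Jset ⟨col i, hcolK i⟩
        · rw [if_pos ⟨hiI, hjJ⟩]
          obtain ⟨i', hci', hAi', hfi'⟩ := hjJ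
          have hii' : i' ≠ i := fun h => hjf (by rw [← hfi', h])
          by_cases hAij : A i j = 0
          · rw [hAij, zero_mul]
          · exfalso
            have hrel : rel i i' := ⟨hii'.symm, Or.inl ⟨hAi', by rwa [hfi']⟩⟩
            exact hcolne i i' hrel (by rw [hci'])
        · rw [if_neg (fun h => hjJ h.2)]
    · intro t _ hne
      refine if_neg (fun h => hne ?_)
      have : col i = (t : ℕ) := h.1
      exact Fin.ext (by simp [← this])
    · intro h; exact absurd (Finset.mem_univ _) h
  -- the two pieces
  set B1 : ℕ → ℕ → R := fun i j => if j = f i then A i j else 0 with hB1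
  set B2 : ℕ → ℕ → R := fun i j => if j = f i then 0 else A i j with hB2
  have hGAG1 : InGAG A B1 := by
    refine ⟨K, fun t => dg 1 (Iset t), fun t => dg 1 (Jset t),
      fun t => ⟨dg_inGamma _ _, dg_inGamma _ _⟩, ?_⟩
    funext i j
    have := key 1 i j
    rw [mul_one] at this
    rw [hB1]
    simp only [Finset.sum_apply]
    exact this.symm
  have hGAG2 : InGAG A B2 := by
    refine ⟨K + 1, Fin.cons (dg 1 Set.univ) (fun t => dg 1 (Iset t)),
      Fin.cons (dg 1 Set.univ) (fun t => dg (-1) (Jset t)),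
      fun t => ?_, ?_⟩
    · refine Fin.cases ?_ (fun t' => ?_) t <;>
        simp only [Fin.cons_zero, Fin.cons_succ] <;>
        exact ⟨dg_inGamma _ _, dg_inGamma _ _⟩
    · funext i j
      simp only [Finset.sum_apply]
      rw [Fin.sum_univ_succ]
      simp only [Fin.cons_zero, Fin.cons_succ]
      have h0 : mul3 (dg (1 : R) Set.univ) A (dg (1 : R) Set.univ) i j = A i j := by
        rw [mul3_dg]; simp
      rw [h0, key (-1) i j]
      by_cases hjf : j = f i
      · rw [hB2]; simp [hjf]
      · rw [hB2]; simp [hjf]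
  -- bddAbove facts
  have hbddr : BddAbove (Set.range fun i => {j | A i j ≠ 0}.ncard) := by
    refine ⟨N, ?_⟩; rintro _ ⟨i, rfl⟩; exact (hrowN i).2
  have hbddc : BddAbove (Set.range fun j => {i | A i j ≠ 0}.ncard) := by
    refine ⟨N, ?_⟩; rintro _ ⟨j, rfl⟩; exact (hcolN j).2
  have hsle : ∀ i, {j | A i j ≠ 0}.ncard ≤ rsup A := fun i => le_ciSup hbddr i
  have hcle : ∀ j, {i | A i j ≠ 0}.ncard ≤ csup A := fun j => le_ciSup hbddc j
  -- rsup bounds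
  have hr1 : rsup B1 < rsup A := by
    have : rsup B1 ≤ 1 := by
      refine ciSup_le fun i => ?_
      have hsub : {j | B1 i j ≠ 0} ⊆ {f i} := by
        intro j hj
        simp only [hB1, Set.mem_setOf_eq] at hj
        by_contra h
        simp only [Set.mem_singleton_iff] at h
        exact hj (if_neg h)
      exact (Set.ncard_le_ncard hsub (Set.finite_singleton _)).trans (by simp)
    omega
  have hr2 : rsup B2 < rsup A := by
    have h2 : rsup B2 ≤ rsup A - 1 := by
      refine ciSup_le fun i => ?_
      have hseq : {j | B2 i j ≠ 0} = {j | A i j ≠ 0} \ {f i} := by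
        ext j
        simp only [hB2, Set.mem_setOf_eq, Set.mem_diff, Set.mem_singleton_iff]
        by_cases h : j = f i <;> simp [h]
      rw [hseq]
      by_cases hne : {j | A i j ≠ 0}.Nonempty
      · have hfmem : f i ∈ {j | A i j ≠ 0} := Nat.sInf_mem hne
        have := Set.ncard_diff_singleton_lt_of_mem hfmem (hrowN i).1
        have := hsle i
        omega
      · rw [Set.not_nonempty_iff_eq_empty] at hne
        rw [hne]
        simp
    omega
  -- csup bounds
  have hcsub : ∀ (Bt : ℕ → ℕ → R), (∀ i j, Bt i j ≠ 0 → A i j ≠ 0) → csup Bt ≤ csup A := by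
    intro Bt hBt
    refine ciSup_le fun j => ?_
    have hsub : {i | Bt i j ≠ 0} ⊆ {i | A i j ≠ 0} := fun i hi => hBt i j hi
    exact (Set.ncard_le_ncard hsub (hcolN j).1).trans (hcle j)
  have hc1 : csup B1 ≤ csup A := by
    refine hcsub B1 fun i j hij => ?_
    simp only [hB1] at hij
    by_cases h : j = f i
    · rwa [if_pos h] at hij
    · rw [if_neg h] at hij; exact absurd rfl hij
  have hc2 : csup B2 ≤ csup A := by
    refine hcsub B2 fun i j hij => ?_
    simp only [hB2] at hij
    by_cases h : j = f i
    · rw [if_pos h] at hij; exact absurd rfl hij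
    · rwa [if_neg h] at hij
  -- assemble
  refine ⟨2, ![B1, B2], ?_, ?_⟩
  · funext i j
    rw [Fin.sum_univ_two]
    simp only [Matrix.cons_val_zero, Matrix.cons_val_one, Matrix.head_cons]
    show A i j = (B1 + B2) i j
    simp only [Pi.add_apply]
    show A i j = B1 i j + B2 i j
    by_cases h : j = f i
    · simp [hB1, hB2, h]
    · simp [hB1, hB2, h]
  · intro t
    fin_cases t
    · simpa using ⟨hGAG1, hr1, hc1⟩
    · simpa using ⟨hGAG2, hr2, hc2⟩
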